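/- Let g̃(x,y) = 2x·cos(y) − 2x·cosh(x) + (x² + y²)·sinh(x). Then for every fixed real y, g̃(x,y) ≥ 0 for all x ≥ 0 and g̃(x,y) ≤ 0 for all x ≤ 0. -/

import Mathlib

lemma sinh_le_mul_cosh {t : ℝ} (ht : 0 ≤ t) : Real.sinh t ≤ t * Real.cosh t := by
  have hF : ∀ s : ℝ, HasDerivAt (fun u => u * Real.cosh u - Real.sinh u)
      (s * Real.sinh s) s := by
    intro s
    have h := ((hasDerivAt_id s).mul (Real.hasDerivAt_cosh s)).sub (Real.hasDerivAt_sinh s)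
    exact h.congr_deriv (by simp [id])
  have hmono : MonotoneOn (fun u => u * Real.cosh u - Real.sinh u) (Set.Ici 0) := by
    apply monotoneOn_of_deriv_nonneg (convex_Ici 0)
    · exact Continuous.continuousOn (by continuity)
    · intro s _
      exact (hF s).differentiableAt.differentiableWithinAt
    · intro s hs
      rw [(hF s).deriv]
      rw [interior_Ici] at hs
      have hs' : (0:ℝ) < s := hs
      have := Real.sinh_pos_iff.2 hs'
      positivity
  have h0 : (0:ℝ) ∈ Set.Ici (0:ℝ) := Set.self_mem_Ici
  have ht' : t ∈ Set.Ici (0:ℝ) := ht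
  have := hmono h0 ht' ht
  simpa using this

lemma key2 {x : ℝ} (hx : 0 ≤ x) : 2 * (Real.cosh x - 1) ≤ x * Real.sinh x := by
  have ht : 0 ≤ x / 2 := by linarith
  have h1 := sinh_le_mul_cosh ht
  have h2 : 0 ≤ Real.sinh (x / 2) := Real.sinh_nonneg_iff.2 ht
  have hc : Real.cosh x = Real.cosh (x / 2) ^ 2 + Real.sinh (x / 2) ^ 2 := by
    rw [← Real.cosh_two_mul]; ring_nf
  have hs : Real.sinh x = 2 * Real.sinh (x / 2) * Real.cosh (x / 2) := by
    rw [← Real.sinh_two_mul]; ring_nf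
  have hsq : Real.cosh (x / 2) ^ 2 = Real.sinh (x / 2) ^ 2 + 1 := Real.cosh_sq _
  nlinarith [mul_le_mul_of_nonneg_left h1 h2]

lemma self_le_sinh' {x : ℝ} (hx : 0 ≤ x) : x ≤ Real.sinh x := by
  rcases hx.eq_or_lt with h | h
  · simp [← h]
  · exact (Real.self_lt_sinh_iff.2 h).le

lemma gtilde_nonneg (y x : ℝ) (hx : 0 ≤ x) :
    0 ≤ 2 * x * Real.cos y - 2 * x * Real.cosh x + (x ^ 2 + y ^ 2) * Real.sinh x := by
  have h1 : 1 - y ^ 2 / 2 ≤ Real.cos y := Real.one_sub_sq_div_two_le_cos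
  have h2 : x ≤ Real.sinh x := self_le_sinh' hx
  have h3 : 2 * (Real.cosh x - 1) ≤ x * Real.sinh x := key2 hx
  nlinarith [mul_le_mul_of_nonneg_left h1 (by linarith : (0:ℝ) ≤ 2 * x),
    mul_le_mul_of_nonneg_left h3 hx,
    mul_le_mul_of_nonneg_left h2 (sq_nonneg y)]

theorem gtilde_sign (y : ℝ) :
    (∀ x : ℝ, 0 ≤ x →
      0 ≤ 2 * x * Real.cos y - 2 * x * Real.cosh x + (x ^ 2 + y ^ 2) * Real.sinh x) ∧
    (∀ x : ℝ, x ≤ 0 →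
      2 * x * Real.cos y - 2 * x * Real.cosh x + (x ^ 2 + y ^ 2) * Real.sinh x ≤ 0) := by
  constructor
  · exact fun x hx => gtilde_nonneg y x hx
  · intro x hx
    have h := gtilde_nonneg y (-x) (by linarith)
    rw [Real.cosh_neg, Real.sinh_neg] at h
    nlinarith [h]
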